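/- Let K be a field, r ≥ 1, and a : ℕʳ → K an r-sequence. Suppose there exist finitely many polynomials p₁,…,p_s in r variables with coefficients in the algebraic closure K̄ of K, and tuples γ₁,…,γ_s ∈ K̄ʳ, such that a(n₁,…,n_r) = Σ_{j=1}^{s} p_j(n₁,…,n_r)·γ_{j,1}^{n₁}⋯γ_{j,r}^{n_r} for all but finitely many tuples (n₁,…,n_r) ∈ ℕʳ (natural numbers evaluated in K̄ via the canonical map ℕ → K̄). Then for each 1 ≤ i ≤ r, the K-linear span of the set of shifts {S_iⁿ a : n ∈ ℕ} inside K^(ℕʳ) is finite-dimensional. -/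

import Mathlib

open Function

lemma exists_dual_one {K L : Type*} [Field K] [AddCommGroup L] [Module K L]
    {x : L} (hx : x ≠ 0) : ∃ π : L →ₗ[K] K, π x = 1 := by
  have hinj : LinearMap.ker (LinearMap.toSpanSingleton K L x) = ⊥ := by
    rw [LinearMap.ker_eq_bot']
    intro k hk
    simpa [LinearMap.toSpanSingleton_apply, smul_eq_zero, hx] using hk
  obtain ⟨g, hg⟩ := LinearMap.exists_leftInverse_of_injective (LinearMap.toSpanSingleton K L x) hinj
  refine ⟨g, ?_⟩
  have := LinearMap.congr_fun hg 1
  simpa [LinearMap.toSpanSingleton_apply] using this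

lemma li_extend {K L : Type*} [Field K] [Field L] [Algebra K L] {S ι : Type*}
    (v : ι → S → K) (hv : LinearIndependent K v) :
    LinearIndependent L (fun i => fun s => algebraMap K L (v i s)) := by
  rw [linearIndependent_iff'] at hv ⊢
  intro t c hc i hi
  by_contra hci
  obtain ⟨π, hπ⟩ := exists_dual_one (K := K) hci
  have key : ∑ j ∈ t, (π (c j)) • v j = 0 := by
    funext s
    have := congrFun hc s
    simp only [Finset.sum_apply, Pi.smul_apply, smul_eq_mul, Pi.zero_apply] at this ⊢
    have := congrArg π this
    rw [map_sum, map_zero] at this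
    rw [← this]
    refine Finset.sum_congr rfl fun j _ => ?_
    have : c j * algebraMap K L (v j s) = v j s • c j := by
      rw [Algebra.smul_def]; ring
    rw [this, map_smul, smul_eq_mul, mul_comm]
  have h0 := hv t _ key i hi
  simp [h0] at hπ

set_option synthInstance.maxHeartbeats 1000000 in
lemma fd_comap {K L : Type*} [Field K] [Field L] [Algebra K L] {S : Type*}
    (V : Submodule L (S → L)) [FiniteDimensional L V] :
    FiniteDimensional K
      (Submodule.comap ((Algebra.linearMap K L).compLeft S) (V.restrictScalars K)) := by
  set φ : (S → K) →ₗ[K] (S → L) := (Algebra.linearMap K L).compLeft S with hφ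
  set W := Submodule.comap φ (V.restrictScalars K) with hW
  have hle : Module.rank K W ≤ (Module.finrank L V : Cardinal) := by
    apply rank_le
    intro fs hfs
    -- independence of the underlying functions
    have h1 : LinearIndependent K fun x : fs => ((x : W) : S → K) :=
      hfs.map' W.subtype W.ker_subtype
    have h2 := li_extend (L := L) (fun x : fs => ((x : W) : S → K)) h1
    have hmemV : ∀ x : fs, (fun s => algebraMap K L (((x : W) : S → K) s)) ∈ V := by
      intro x
      have hx := (x : W).2
      simp only [hW, Submodule.mem_comap, Submodule.restrictScalars_mem] at hx
      exact hx
    set w : fs → V := fun x => ⟨_, hmemV x⟩ with hw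
    have h3 : LinearIndependent L w := by
      apply LinearIndependent.of_comp V.subtype
      exact h2
    have := h3.fintype_card_le_finrank
    simpa [Fintype.card_coe] using this
  exact Module.rank_lt_aleph0_iff.mp (lt_of_le_of_lt hle (Cardinal.nat_lt_aleph0 _))

lemma mem_span_singles {L S : Type*} [Field L] [DecidableEq S] (f : S → L) (T : Set S)
    (hT : T.Finite) (hsupp : ∀ s, f s ≠ 0 → s ∈ T) :
    f ∈ Submodule.span L ((fun t => Pi.single t (1 : L)) '' T) := by
  have : f = ∑ t ∈ hT.toFinset, f t • (Pi.single t (1 : L) : S → L) := by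
    funext s
    simp only [Finset.sum_apply, Pi.smul_apply, Pi.single_apply, smul_eq_mul, mul_ite,
      mul_one, mul_zero]
    rw [Finset.sum_ite_eq hT.toFinset s f]
    by_cases hs : s ∈ T
    · simp [hT.mem_toFinset, hs]
    · simp only [hT.mem_toFinset, hs, if_false]
      by_contra hne
      exact hs (hsupp s hne)
  rw [this]
  exact Submodule.sum_mem _ fun t ht => Submodule.smul_mem _ _
    (Submodule.subset_span ⟨t, hT.mem_toFinset.mp ht, rfl⟩)

lemma shift_g {L : Type*} [Field L] {r : ℕ} (γi : Fin r → L) (β : Fin r → ℕ)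
    (i : Fin r) (t : ℕ) :
    (fun n : Fin r → ℕ =>
        (∏ i', (((n + Pi.single i t : Fin r → ℕ) i' : ℕ) : L) ^ β i') *
          ∏ i', γi i' ^ (n + Pi.single i t : Fin r → ℕ) i') =
      ∑ k ∈ Finset.range (β i + 1),
        ((((β i).choose k : ℕ) : L) * (t : L) ^ (β i - k) * γi i ^ t) •
          (fun n : Fin r → ℕ =>
            (∏ i', ((n i' : ℕ) : L) ^ (Function.update β i k i')) * ∏ i', γi i' ^ n i') := by
  funext n
  set m : Fin r → ℕ := Pi.single i t with hm
  have hsplit : ∀ f : Fin r → L, ∏ i', f i' = f i * ∏ i' ∈ Finset.univ.erase i, f i' :=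
    fun f => (Finset.mul_prod_erase Finset.univ f (Finset.mem_univ i)).symm
  simp only [Finset.sum_apply, Pi.smul_apply, smul_eq_mul, hsplit]
  have hne : ∀ i' ∈ Finset.univ.erase i, i' ≠ i := fun i' hi' => (Finset.mem_erase.mp hi').1
  have e1 : ∀ i' ∈ Finset.univ.erase i,
      (((n + m) i' : ℕ) : L) ^ β i' = ((n i' : ℕ) : L) ^ β i' := by
    intro i' hi'; rw [hm]; simp [Pi.single_eq_of_ne (hne i' hi')]
  have e2 : ∀ i' ∈ Finset.univ.erase i, γi i' ^ (n + m) i' = γi i' ^ n i' := by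
    intro i' hi'; rw [hm]; simp [Pi.single_eq_of_ne (hne i' hi')]
  have e3 : ∀ k, ∀ i' ∈ Finset.univ.erase i,
      ((n i' : ℕ) : L) ^ (Function.update β i k i') = ((n i' : ℕ) : L) ^ β i' := by
    intro k i' hi'; rw [Function.update_of_ne (hne i' hi')]
  rw [Finset.prod_congr rfl e1, Finset.prod_congr rfl e2]
  have hmi : (n + m) i = n i + t := by rw [hm]; simp
  simp only [hmi, Function.update_self]
  push_cast
  rw [add_pow, pow_add, Finset.sum_mul, Finset.sum_mul]
  refine Finset.sum_congr rfl fun k hk => ?_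
  rw [Finset.prod_congr rfl (e3 k)]
  ring

/-- Monomial-exponential basis functions. -/
def gfun {L : Type*} [Field L] {r s : ℕ} (γ : Fin s → Fin r → L) (j : Fin s)
    (β : Fin r → ℕ) : (Fin r → ℕ) → L :=
  fun n => (∏ i', ((n i' : ℕ) : L) ^ β i') * ∏ i', γ j i' ^ n i'

lemma shift_gfun {L : Type*} [Field L] {r s : ℕ} (γ : Fin s → Fin r → L) (j : Fin s)
    (β : Fin r → ℕ) (i : Fin r) (t : ℕ) :
    (fun n : Fin r → ℕ => gfun γ j β (n + Pi.single i t)) =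
      ∑ k ∈ Finset.range (β i + 1),
        ((((β i).choose k : ℕ) : L) * (t : L) ^ (β i - k) * γ j i ^ t) •
          gfun γ j (Function.update β i k) :=
  shift_g (γ j) β i t

lemma F_decomp {L : Type*} [Field L] {r s : ℕ} (p : Fin s → MvPolynomial (Fin r) L)
    (γ : Fin s → Fin r → L) (m : Fin r → ℕ) :
    (fun n : Fin r → ℕ =>
        ∑ j : Fin s, MvPolynomial.eval (fun i' => (((n + m : Fin r → ℕ) i' : ℕ) : L)) (p j) *
          ∏ i', γ j i' ^ (n + m : Fin r → ℕ) i') =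
      ∑ j : Fin s, ∑ d ∈ (p j).support,
        MvPolynomial.coeff d (p j) • (fun n : Fin r → ℕ => gfun γ j ⇑d (n + m)) := by
  funext n
  simp only [Finset.sum_apply, Pi.smul_apply, smul_eq_mul, MvPolynomial.eval_eq',
    Finset.sum_mul, gfun, mul_assoc]

/-- The shift `Sᵐa` of an `r`-sequence `a : ℕʳ → K` by `m ∈ ℕʳ`: `n ↦ a (n + m)`. -/
def mshift {K : Type*} [Field K] {r : ℕ} (a : (Fin r → ℕ) → K) (m : Fin r → ℕ) :
    (Fin r → ℕ) → K :=
  fun n => a (n + m)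

set_option maxHeartbeats 1600000 in
/-- if an `r`-sequence is given, off a finite set, by an exponential-polynomial
expression over the algebraic closure, then for each `i` the span of the coordinate shifts
`S_iⁿ a` is finite-dimensional. -/
theorem exp_poly_imp_coordinate_shifts_finiteDimensional {K : Type*} [Field K] {r : ℕ}
    (hr : 1 ≤ r) (a : (Fin r → ℕ) → K) (s : ℕ)
    (p : Fin s → MvPolynomial (Fin r) (AlgebraicClosure K))
    (γ : Fin s → Fin r → AlgebraicClosure K)
    (h : {n : Fin r → ℕ | algebraMap K (AlgebraicClosure K) (a n) ≠
        ∑ j : Fin s, MvPolynomial.eval (fun i => (n i : AlgebraicClosure K)) (p j) *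
          ∏ i : Fin r, γ j i ^ n i}.Finite) :
    ∀ i : Fin r, FiniteDimensional K (Submodule.span K
      (Set.range fun n : ℕ => mshift a (Pi.single i n))) := by
  classical
  intro i
  set bad : Set (Fin r → ℕ) := {n : Fin r → ℕ | algebraMap K (AlgebraicClosure K) (a n) ≠
      ∑ j : Fin s, MvPolynomial.eval (fun i => (n i : AlgebraicClosure K)) (p j) *
        ∏ i : Fin r, γ j i ^ n i} with hbad
  -- finite "downward closure" of the bad set
  have hIic : ∀ b : Fin r → ℕ, (Set.Iic b).Finite := by
    intro b
    apply (Set.Finite.pi fun i' => Set.finite_Iic (b i')).subset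
    intro n hn
    simp only [Set.mem_pi, Set.mem_univ, forall_true_left, Set.mem_Iic]
    exact fun i' => hn i'
  set T : Set (Fin r → ℕ) := ⋃ b ∈ bad, Set.Iic b with hTdef
  have hT : T.Finite := by
    rw [hTdef, hbad]
    exact Set.Finite.biUnion h fun b _ => hIic b
  -- bound on the exponents
  set B : ℕ := Finset.univ.sup fun j => (p j).totalDegree with hB
  have hdB : ∀ j : Fin s, ∀ d ∈ (p j).support, ∀ i' : Fin r, d i' ≤ B := by
    intro j d hd i'
    have h1 : d i' ≤ d.sum fun _ e => e := by
      by_cases hz : d i' = 0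
      · simp [hz]
      · have hmem : i' ∈ d.support := Finsupp.mem_support_iff.mpr hz
        calc d i' ≤ ∑ x ∈ d.support, d x :=
              Finset.single_le_sum (fun _ _ => Nat.zero_le _) hmem
          _ = d.sum fun _ e => e := rfl
    have h2 : (p j).totalDegree ≤ B := hB ▸ Finset.le_sup (f := fun j => (p j).totalDegree) (Finset.mem_univ j)
    exact h1.trans ((MvPolynomial.le_totalDegree hd).trans h2)
  -- the finite generating set and its span
  set box : Set (Fin r → ℕ) := {β | ∀ i', β i' ≤ B} with hbox
  have hboxfin : box.Finite := by
    apply (Set.Finite.pi fun _ : Fin r => Set.finite_Iic B).subset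
    intro β hβ
    simp only [Set.mem_pi, Set.mem_univ, forall_true_left, Set.mem_Iic]
    exact fun i' => hβ i'
  set GS : Set ((Fin r → ℕ) → (AlgebraicClosure K)) :=
    ((fun jβ : Fin s × (Fin r → ℕ) => gfun γ jβ.1 jβ.2) '' (Set.univ ×ˢ box)) ∪
      ((fun t => Pi.single t (1 : (AlgebraicClosure K))) '' T) with hGS
  have hGSfin : GS.Finite :=
    ((Set.finite_univ.prod hboxfin).image _).union (hT.image _)
  set V : Submodule (AlgebraicClosure K) ((Fin r → ℕ) → (AlgebraicClosure K)) := Submodule.span (AlgebraicClosure K) GS with hV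
  haveI : FiniteDimensional (AlgebraicClosure K) V := FiniteDimensional.span_of_finite (AlgebraicClosure K) hGSfin
  have hg_mem : ∀ j : Fin s, ∀ β : Fin r → ℕ, (∀ i', β i' ≤ B) → gfun γ j β ∈ V :=
    fun j β hβ => Submodule.subset_span (Or.inl ⟨(j, β), ⟨Set.mem_univ _, hβ⟩, rfl⟩)
  have hshift_g : ∀ j : Fin s, ∀ β : Fin r → ℕ, (∀ i', β i' ≤ B) → ∀ t : ℕ,
      (fun n : Fin r → ℕ => gfun γ j β (n + Pi.single i t)) ∈ V := by
    intro j β hβ t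
    rw [shift_gfun γ j β i t]
    refine Submodule.sum_mem _ fun k hk => Submodule.smul_mem _ _ (hg_mem j _ ?_)
    intro i'
    by_cases hii : i' = i
    · subst hii
      rw [Function.update_self]
      exact (Nat.lt_succ_iff.mp (Finset.mem_range.mp hk)).trans (hβ i')
    · rw [Function.update_of_ne hii]
      exact hβ i'
  -- membership of the shifted sequence
  have key : ∀ t : ℕ, (fun n : Fin r → ℕ => algebraMap K (AlgebraicClosure K) (a (n + Pi.single i t))) ∈ V := by
    intro t
    set m : Fin r → ℕ := Pi.single i t with hm
    have hdecomp : (fun n : Fin r → ℕ => algebraMap K (AlgebraicClosure K) (a (n + m))) =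
        (fun n : Fin r → ℕ =>
          ∑ j : Fin s, MvPolynomial.eval (fun i' => (((n + m : Fin r → ℕ) i' : ℕ) : (AlgebraicClosure K))) (p j) *
            ∏ i', γ j i' ^ (n + m : Fin r → ℕ) i') +
        (fun n : Fin r → ℕ => algebraMap K (AlgebraicClosure K) (a (n + m)) -
          ∑ j : Fin s, MvPolynomial.eval (fun i' => (((n + m : Fin r → ℕ) i' : ℕ) : (AlgebraicClosure K))) (p j) *
            ∏ i', γ j i' ^ (n + m : Fin r → ℕ) i') := by
      funext n
      simp only [Pi.add_apply]
      ring
    rw [hdecomp]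
    apply Submodule.add_mem
    · rw [F_decomp p γ m]
      refine Submodule.sum_mem _ fun j _ => Submodule.sum_mem _ fun d hd =>
        Submodule.smul_mem _ _ ?_
      exact hshift_g j ⇑d (hdB j d hd) t
    · have hin : ∀ n : Fin r → ℕ,
          (algebraMap K (AlgebraicClosure K) (a (n + m)) -
            ∑ j : Fin s, MvPolynomial.eval (fun i' => (((n + m : Fin r → ℕ) i' : ℕ) : (AlgebraicClosure K))) (p j) *
              ∏ i', γ j i' ^ (n + m : Fin r → ℕ) i') ≠ 0 → n ∈ T := by
        intro n hn
        have hnm : (n + m) ∈ bad := by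
          rw [hbad]
          intro hEq
          apply hn
          rw [sub_eq_zero]
          exact hEq
        exact Set.mem_biUnion hnm (by
          rw [Set.mem_Iic]
          intro i'
          exact Nat.le_add_right _ _)
      have hmem := mem_span_singles _ T hT hin
      have hle2 : Submodule.span (AlgebraicClosure K)
          ((fun t => Pi.single t (1 : AlgebraicClosure K)) '' T) ≤ V := by
        rw [hV]
        exact Submodule.span_mono Set.subset_union_right
      exact hle2 hmem
  -- transfer to K
  have hsub : (Set.range fun n : ℕ => mshift a (Pi.single i n)) ⊆
      ↑(Submodule.comap ((Algebra.linearMap K (AlgebraicClosure K)).compLeft (Fin r → ℕ))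
        (V.restrictScalars K)) := by
    rintro _ ⟨t, rfl⟩
    simp only [SetLike.mem_coe, Submodule.mem_comap, Submodule.restrictScalars_mem]
    exact key t
  haveI := fd_comap (K := K) V
  exact Submodule.finiteDimensional_of_le (Submodule.span_le.mpr hsub)
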